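/- arXiv:2206.00127 — 3 statements merged into one kernel-verified Lean document; each statement's English description precedes it below -/
import Mathlib

section
/- Let P₁ and P₂ be probability distributions on a finite index set [m] with total variation distance η < 1, and let X_1, ..., X_m ∈ ℝ^{d×r}. Then ‖E_{P₁}[X] − E_{P₂}[X]‖₂ ≤ (√η / (1 − √η)) · (‖Σ_{P₁}‖₂^{1/2} + ‖Σ_{P₂}‖₂^{1/2}), where Σ_{P_j} = E_{i∼P_j}[(X_i − E_{P_j}X)(X_i − E_{P_j}X)ᵀ]. -/
open Matrix Finset

/-- Spectral (ℓ² → ℓ²) operator norm of a real matrix. -/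
noncomputable def spec {d r : ℕ} (M : Matrix (Fin d) (Fin r) ℝ) : ℝ :=
  ‖LinearMap.toContinuousLinearMap (Matrix.toEuclideanLin M)‖

/-- Mean of matrix-valued samples under a discrete distribution `P` on `Fin m`. -/
noncomputable def distMean {m d r : ℕ} (P : Fin m → ℝ)
    (X : Fin m → Matrix (Fin d) (Fin r) ℝ) : Matrix (Fin d) (Fin r) ℝ :=
  ∑ i, P i • X i

/-- Covariance of matrix-valued samples under a discrete distribution `P` on `Fin m`. -/
noncomputable def distCov {m d r : ℕ} (P : Fin m → ℝ)
    (X : Fin m → Matrix (Fin d) (Fin r) ℝ) : Matrix (Fin d) (Fin d) ℝ :=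
  ∑ i, P i • ((X i - distMean P X) * (X i - distMean P X)ᵀ)

lemma spec_nonneg {d r : ℕ} (M : Matrix (Fin d) (Fin r) ℝ) : 0 ≤ spec M := norm_nonneg _

lemma spec_smul {d r : ℕ} (c : ℝ) (M : Matrix (Fin d) (Fin r) ℝ) :
    spec (c • M) = |c| * spec M := by
  unfold spec
  rw [_root_.map_smul, _root_.map_smul]
  have := norm_smul c (LinearMap.toContinuousLinearMap (Matrix.toEuclideanLin M))
  rw [this, Real.norm_eq_abs]

lemma spec_sub_le {d r : ℕ} (A B : Matrix (Fin d) (Fin r) ℝ) :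
    spec (A - B) ≤ spec A + spec B := by
  unfold spec
  rw [map_sub, map_sub]
  exact norm_sub_le _ _

lemma euclid_norm_eq {n : ℕ} (y : EuclideanSpace ℝ (Fin n)) :
    ‖y‖ = Real.sqrt ((fun i => y i) ⬝ᵥ (fun i => y i)) := by
  rw [EuclideanSpace.norm_eq]
  congr 1
  simp [dotProduct, Real.norm_eq_abs, sq_abs, pow_two]

lemma euclid_inner_eq {n : ℕ} (x y : EuclideanSpace ℝ (Fin n)) :
    (inner ℝ x y : ℝ) = (fun i => x i) ⬝ᵥ (fun i => y i) := by
  simp [PiLp.inner_apply, dotProduct, mul_comm]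

lemma spec_le_of_dot {d r : ℕ} (M : Matrix (Fin d) (Fin r) ℝ) (c : ℝ) (hc : 0 ≤ c)
    (h : ∀ (u : Fin d → ℝ) (v : Fin r → ℝ),
      u ⬝ᵥ (M *ᵥ v) ≤ c * Real.sqrt (u ⬝ᵥ u) * Real.sqrt (v ⬝ᵥ v)) :
    spec M ≤ c := by
  apply ContinuousLinearMap.opNorm_le_bound _ hc
  intro x
  set y : EuclideanSpace ℝ (Fin d) := Matrix.toEuclideanLin M x with hy
  show ‖y‖ ≤ c * ‖x‖
  have hyx : (inner ℝ y y : ℝ) = (fun i => y i) ⬝ᵥ (M *ᵥ fun j => x j) := by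
    rw [euclid_inner_eq]; rfl
  have key : ‖y‖ ^ 2 ≤ c * ‖x‖ * ‖y‖ := by
    rw [← real_inner_self_eq_norm_sq, hyx]
    calc (fun i => y i) ⬝ᵥ (M *ᵥ fun j => x j)
        ≤ c * Real.sqrt ((fun i => y i) ⬝ᵥ (fun i => y i)) *
            Real.sqrt ((fun j => x j) ⬝ᵥ (fun j => x j)) := h _ _
      _ = c * ‖x‖ * ‖y‖ := by rw [← euclid_norm_eq, ← euclid_norm_eq]; ring
  rcases eq_or_lt_of_le (norm_nonneg y) with h0 | h0
  · rw [← h0]; positivity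
  · have := key
    rw [pow_two] at this
    exact le_of_mul_le_mul_right (by linarith) h0

lemma dot_spec_bound {d : ℕ} (S : Matrix (Fin d) (Fin d) ℝ) (u : Fin d → ℝ) :
    u ⬝ᵥ (S *ᵥ u) ≤ spec S * (u ⬝ᵥ u) := by
  set u' : EuclideanSpace ℝ (Fin d) := (WithLp.equiv 2 (Fin d → ℝ)).symm u with hu'
  have h1 : u ⬝ᵥ (S *ᵥ u) = (inner ℝ u' (Matrix.toEuclideanLin S u') : ℝ) := by
    rw [euclid_inner_eq]; rfl
  have h2 : (inner ℝ u' (Matrix.toEuclideanLin S u') : ℝ) ≤ ‖u'‖ * ‖Matrix.toEuclideanLin S u'‖ :=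
    real_inner_le_norm _ _
  have h3 : ‖Matrix.toEuclideanLin S u'‖ ≤ spec S * ‖u'‖ :=
    (LinearMap.toContinuousLinearMap (Matrix.toEuclideanLin S)).le_opNorm u'
  have h4 : ‖u'‖ ^ 2 = u ⬝ᵥ u := by
    rw [euclid_norm_eq, Real.sq_sqrt]
    · rfl
    · exact Finset.sum_nonneg fun i _ => mul_self_nonneg _
  calc u ⬝ᵥ (S *ᵥ u) ≤ ‖u'‖ * ‖Matrix.toEuclideanLin S u'‖ := h1 ▸ h2
    _ ≤ ‖u'‖ * (spec S * ‖u'‖) :=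
        mul_le_mul_of_nonneg_left h3 (norm_nonneg _)
    _ = spec S * (u ⬝ᵥ u) := by rw [← h4]; ring

/-- `M ↦ u ⬝ᵥ M *ᵥ v` as a linear map. -/
noncomputable def dotForm {d r : ℕ} (u : Fin d → ℝ) (v : Fin r → ℝ) :
    Matrix (Fin d) (Fin r) ℝ →ₗ[ℝ] ℝ where
  toFun M := u ⬝ᵥ (M *ᵥ v)
  map_add' M N := by simp [Matrix.add_mulVec, dotProduct_add]
  map_smul' c M := by simp [Matrix.smul_mulVec, dotProduct_smul]

lemma dot_nonneg {n : ℕ} (w : Fin n → ℝ) : 0 ≤ w ⬝ᵥ w :=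
  Finset.sum_nonneg fun i _ => mul_self_nonneg _

lemma spec_sum_smul_le {m d r : ℕ} (R P : Fin m → ℝ) (A : Fin m → Matrix (Fin d) (Fin r) ℝ)
    (hR : ∀ i, 0 ≤ R i) (hRP : ∀ i, R i ≤ P i) :
    spec (∑ i, R i • A i) ≤
      Real.sqrt (∑ i, R i) * Real.sqrt (spec (∑ i, P i • (A i * (A i)ᵀ))) := by
  set S : Matrix (Fin d) (Fin d) ℝ := ∑ i, P i • (A i * (A i)ᵀ) with hS
  apply spec_le_of_dot _ _ (by positivity)
  intro u v
  set a : Fin m → ℝ := fun i => u ⬝ᵥ (A i *ᵥ v) with ha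
  have hw : ∀ i, a i = ((A i)ᵀ *ᵥ u) ⬝ᵥ v := by
    intro i
    rw [ha]
    simp [Matrix.dotProduct_mulVec, Matrix.mulVec_transpose]
  have hL : u ⬝ᵥ ((∑ i, R i • A i) *ᵥ v) = ∑ i, R i * a i := by
    show dotForm u v (∑ i, R i • A i) = _
    rw [map_sum]
    simp [dotForm, Matrix.smul_mulVec, dotProduct_smul, ha]
  -- Cauchy-Schwarz step
  have cs : ∑ i, R i * a i ≤ Real.sqrt (∑ i, R i) * Real.sqrt (∑ i, R i * a i ^ 2) := by
    calc ∑ i, R i * a i = ∑ i, Real.sqrt (R i) * (Real.sqrt (R i) * a i) := by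
          refine Finset.sum_congr rfl fun i _ => ?_
          rw [← mul_assoc, Real.mul_self_sqrt (hR i)]
      _ ≤ Real.sqrt (∑ i, Real.sqrt (R i) ^ 2) *
            Real.sqrt (∑ i, (Real.sqrt (R i) * a i) ^ 2) :=
          Real.sum_mul_le_sqrt_mul_sqrt _ _ _
      _ = Real.sqrt (∑ i, R i) * Real.sqrt (∑ i, R i * a i ^ 2) := by
          congr 2 <;> refine Finset.sum_congr rfl fun i _ => ?_
          · exact Real.sq_sqrt (hR i)
          · rw [mul_pow, Real.sq_sqrt (hR i)]
  -- bound the second moment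
  have hP : ∀ i, 0 ≤ P i := fun i => (hR i).trans (hRP i)
  have m1 : ∑ i, R i * a i ^ 2 ≤ ∑ i, P i * a i ^ 2 :=
    Finset.sum_le_sum fun i _ => mul_le_mul_of_nonneg_right (hRP i) (sq_nonneg _)
  have m2 : ∀ i, a i ^ 2 ≤ (((A i)ᵀ *ᵥ u) ⬝ᵥ ((A i)ᵀ *ᵥ u)) * (v ⬝ᵥ v) := by
    intro i
    rw [hw i]
    have := Finset.sum_mul_sq_le_sq_mul_sq Finset.univ ((A i)ᵀ *ᵥ u) v
    calc (((A i)ᵀ *ᵥ u) ⬝ᵥ v) ^ 2 = (∑ j, ((A i)ᵀ *ᵥ u) j * v j) ^ 2 := rfl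
      _ ≤ (∑ j, ((A i)ᵀ *ᵥ u) j ^ 2) * ∑ j, v j ^ 2 := this
      _ = (((A i)ᵀ *ᵥ u) ⬝ᵥ ((A i)ᵀ *ᵥ u)) * (v ⬝ᵥ v) := by
          simp [dotProduct, pow_two]
  have m3 : u ⬝ᵥ (S *ᵥ u) = ∑ i, P i * (((A i)ᵀ *ᵥ u) ⬝ᵥ ((A i)ᵀ *ᵥ u)) := by
    show dotForm u u S = _
    rw [hS, map_sum]
    refine Finset.sum_congr rfl fun i _ => ?_
    simp only [_root_.map_smul, smul_eq_mul]
    congr 1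
    show u ⬝ᵥ ((A i * (A i)ᵀ) *ᵥ u) = _
    rw [← Matrix.mulVec_mulVec, Matrix.dotProduct_mulVec, ← Matrix.mulVec_transpose]
  have m4 : ∑ i, P i * a i ^ 2 ≤ spec S * (u ⬝ᵥ u) * (v ⬝ᵥ v) := by
    calc ∑ i, P i * a i ^ 2
        ≤ ∑ i, P i * ((((A i)ᵀ *ᵥ u) ⬝ᵥ ((A i)ᵀ *ᵥ u)) * (v ⬝ᵥ v)) :=
          Finset.sum_le_sum fun i _ => mul_le_mul_of_nonneg_left (m2 i) (hP i)
      _ = (∑ i, P i * (((A i)ᵀ *ᵥ u) ⬝ᵥ ((A i)ᵀ *ᵥ u))) * (v ⬝ᵥ v) := by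
          rw [Finset.sum_mul]; exact Finset.sum_congr rfl fun i _ => by ring
      _ ≤ (spec S * (u ⬝ᵥ u)) * (v ⬝ᵥ v) := by
          apply mul_le_mul_of_nonneg_right _ (dot_nonneg v)
          rw [← m3]; exact dot_spec_bound S u
      _ = spec S * (u ⬝ᵥ u) * (v ⬝ᵥ v) := by ring
  -- combine
  have hRa : ∑ i, R i * a i ^ 2 ≤ spec S * (u ⬝ᵥ u) * (v ⬝ᵥ v) := m1.trans m4
  calc u ⬝ᵥ ((∑ i, R i • A i) *ᵥ v) = ∑ i, R i * a i := hL
    _ ≤ Real.sqrt (∑ i, R i) * Real.sqrt (∑ i, R i * a i ^ 2) := cs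
    _ ≤ Real.sqrt (∑ i, R i) * Real.sqrt (spec S * (u ⬝ᵥ u) * (v ⬝ᵥ v)) := by
        apply mul_le_mul_of_nonneg_left (Real.sqrt_le_sqrt hRa) (Real.sqrt_nonneg _)
    _ = Real.sqrt (∑ i, R i) * Real.sqrt (spec S) * (Real.sqrt (u ⬝ᵥ u) *
          Real.sqrt (v ⬝ᵥ v)) := by
        rw [Real.sqrt_mul (mul_nonneg (spec_nonneg S) (dot_nonneg u)),
          Real.sqrt_mul (spec_nonneg S)]
        ring
    _ = Real.sqrt (∑ i, R i) * Real.sqrt (spec S) * Real.sqrt (u ⬝ᵥ u) *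
          Real.sqrt (v ⬝ᵥ v) := by ring


/-- If `d_TV(P₁,P₂) = η < 1` then
`‖E_{P₁}X − E_{P₂}X‖₂ ≤ (√η/(1−√η)) (‖Σ_{P₁}‖₂^{1/2} + ‖Σ_{P₂}‖₂^{1/2})`. -/
theorem mean_difference_tv_bound {m d r : ℕ}
    (P₁ P₂ : Fin m → ℝ) (X : Fin m → Matrix (Fin d) (Fin r) ℝ)
    (hP₁ : ∀ i, 0 ≤ P₁ i) (hP₂ : ∀ i, 0 ≤ P₂ i)
    (hP₁sum : ∑ i, P₁ i = 1) (hP₂sum : ∑ i, P₂ i = 1)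
    (η : ℝ) (hη : (1 / 2 : ℝ) * ∑ i, |P₁ i - P₂ i| = η) (hη1 : η < 1) :
    spec (distMean P₁ X - distMean P₂ X)
      ≤ (Real.sqrt η / (1 - Real.sqrt η)) *
          (Real.sqrt (spec (distCov P₁ X)) + Real.sqrt (spec (distCov P₂ X))) := by
  have hη0 : 0 ≤ η := by
    rw [← hη]
    positivity
  set R₁ : Fin m → ℝ := fun i => P₁ i - min (P₁ i) (P₂ i) with hR₁def
  set R₂ : Fin m → ℝ := fun i => P₂ i - min (P₁ i) (P₂ i) with hR₂def
  have hR₁0 : ∀ i, 0 ≤ R₁ i := fun i => sub_nonneg.2 (min_le_left _ _)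
  have hR₂0 : ∀ i, 0 ≤ R₂ i := fun i => sub_nonneg.2 (min_le_right _ _)
  have hR₁P : ∀ i, R₁ i ≤ P₁ i := fun i => by
    have := le_min (hP₁ i) (hP₂ i)
    simp only [hR₁def]
    have h0 : 0 ≤ min (P₁ i) (P₂ i) := le_min (hP₁ i) (hP₂ i)
    linarith
  have hR₂P : ∀ i, R₂ i ≤ P₂ i := fun i => by
    have h0 : 0 ≤ min (P₁ i) (P₂ i) := le_min (hP₁ i) (hP₂ i)
    simp only [hR₂def]
    linarith
  have habs : ∀ i, R₁ i + R₂ i = |P₁ i - P₂ i| := by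
    intro i
    rcases le_total (P₁ i) (P₂ i) with h | h
    · simp [hR₁def, hR₂def, min_eq_left h, abs_of_nonpos (sub_nonpos.2 h)]
    · simp [hR₁def, hR₂def, min_eq_right h, abs_of_nonneg (sub_nonneg.2 h)]
  have hdiff : ∀ i, R₁ i - R₂ i = P₁ i - P₂ i := fun i => by
    simp [hR₁def, hR₂def]
  have hsum11 : ∑ i, (R₁ i + R₂ i) = 2 * η := by
    rw [Finset.sum_congr rfl fun i _ => habs i]
    linarith [hη]
  have hsum12 : ∑ i, (R₁ i - R₂ i) = 0 := by
    rw [Finset.sum_congr rfl fun i _ => hdiff i, Finset.sum_sub_distrib, hP₁sum, hP₂sum]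
    ring
  have hS1 : ∑ i, R₁ i = η := by
    have h1 := hsum11; have h2 := hsum12
    rw [Finset.sum_add_distrib] at h1
    rw [Finset.sum_sub_distrib] at h2
    linarith
  have hS2 : ∑ i, R₂ i = η := by
    have h1 := hsum11; have h2 := hsum12
    rw [Finset.sum_add_distrib] at h1
    rw [Finset.sum_sub_distrib] at h2
    linarith
  set μ₁ := distMean P₁ X
  set μ₂ := distMean P₂ X
  set D := μ₁ - μ₂ with hD
  set B₁ : Matrix (Fin d) (Fin r) ℝ := ∑ i, R₁ i • (X i - μ₁) with hB₁
  set B₂ : Matrix (Fin d) (Fin r) ℝ := ∑ i, R₂ i • (X i - μ₂) with hB₂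
  have hBeq : ∀ (R : Fin m → ℝ) (μ : Matrix (Fin d) (Fin r) ℝ),
      (∑ i, R i • (X i - μ)) = (∑ i, R i • X i) - (∑ i, R i) • μ := by
    intro R μ
    simp only [smul_sub, Finset.sum_sub_distrib, ← Finset.sum_smul]
  have hXdiff : (∑ i, R₁ i • X i) - (∑ i, R₂ i • X i) = D := by
    rw [← Finset.sum_sub_distrib]
    have : ∀ i, R₁ i • X i - R₂ i • X i = P₁ i • X i - P₂ i • X i := by
      intro i
      rw [← sub_smul, ← sub_smul, hdiff i]
    rw [Finset.sum_congr rfl fun i _ => this i, Finset.sum_sub_distrib]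
    rfl
  have hdecomp : B₁ - B₂ = (1 - η) • D := by
    rw [hB₁, hB₂, hBeq, hBeq, hS1, hS2]
    have : (∑ i, R₁ i • X i) - η • μ₁ - ((∑ i, R₂ i • X i) - η • μ₂)
        = ((∑ i, R₁ i • X i) - (∑ i, R₂ i • X i)) - η • (μ₁ - μ₂) := by
      rw [smul_sub]; abel
    rw [this, hXdiff, ← hD, sub_smul, one_smul]
  have hB₁le : spec B₁ ≤ Real.sqrt η * Real.sqrt (spec (distCov P₁ X)) := by
    have := spec_sum_smul_le R₁ P₁ (fun i => X i - μ₁) hR₁0 hR₁P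
    rw [hS1] at this
    exact this
  have hB₂le : spec B₂ ≤ Real.sqrt η * Real.sqrt (spec (distCov P₂ X)) := by
    have := spec_sum_smul_le R₂ P₂ (fun i => X i - μ₂) hR₂0 hR₂P
    rw [hS2] at this
    exact this
  have hkey : (1 - η) * spec D ≤
      Real.sqrt η * (Real.sqrt (spec (distCov P₁ X)) + Real.sqrt (spec (distCov P₂ X))) := by
    have h1 : spec ((1 - η) • D) = (1 - η) * spec D := by
      rw [spec_smul, abs_of_nonneg (by linarith)]
    calc (1 - η) * spec D = spec (B₁ - B₂) := by rw [hdecomp, h1]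
      _ ≤ spec B₁ + spec B₂ := spec_sub_le _ _
      _ ≤ _ := by linarith [hB₁le, hB₂le]
  have hsq1 : Real.sqrt η < 1 := by
    rw [show (1:ℝ) = Real.sqrt 1 by simp]
    exact Real.sqrt_lt_sqrt hη0 hη1
  have hηsq : η ≤ Real.sqrt η := by
    nlinarith [Real.sq_sqrt hη0, Real.sqrt_nonneg η]
  have h1η : 0 < 1 - η := by linarith
  have h1sq : 0 < 1 - Real.sqrt η := by linarith
  set s := Real.sqrt (spec (distCov P₁ X)) + Real.sqrt (spec (distCov P₂ X)) with hs
  have hs0 : 0 ≤ s := by positivity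
  have step1 : spec D ≤ Real.sqrt η * s / (1 - η) := by
    rw [le_div_iff₀ h1η]
    linarith [hkey]
  have step2 : Real.sqrt η * s / (1 - η) ≤ Real.sqrt η * s / (1 - Real.sqrt η) := by
    apply div_le_div_of_nonneg_left _ h1sq (by linarith)
    positivity
  calc spec D ≤ Real.sqrt η * s / (1 - η) := step1
    _ ≤ Real.sqrt η * s / (1 - Real.sqrt η) := step2
    _ = (Real.sqrt η / (1 - Real.sqrt η)) * s := by ring
end

section
/- Let G ⊆ S ⊆ [m] be finite index sets, with data X_i ∈ ℝ^{d×r}, empirical means μ_G, μ_S and empirical covariances Σ_G, Σ_S (defined with vectorized outer products projected along a unit vector v ∈ ℝ^d). Let v be the leading eigenvector of Σ_S and define outlier scores τ_i = ⟨v, (X_i − μ_S)(X_i − μ_S)ᵀ v⟩ for i ∈ S. Let η = 1 − |G|/|S| and fix γ ∈ (0, 1/η). If ‖Σ_S‖₂ ≥ (1 − η)² (γ/(1 − γη)) ‖Σ_G‖₂, then Σ_{j∈G} τ_j ≤ (1/γ) Σ_{i∈S} τ_i. -/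
open Matrix Finset

/-- Empirical mean of matrix-valued samples over a finite index set. -/
noncomputable def empMean {ι : Type*} {d r : ℕ} (X : ι → Matrix (Fin d) (Fin r) ℝ)
    (S : Finset ι) : Matrix (Fin d) (Fin r) ℝ :=
  ((S.card : ℝ)⁻¹) • ∑ i ∈ S, X i

/-- Empirical covariance of matrix-valued samples over a finite index set. -/
noncomputable def empCov {ι : Type*} {d r : ℕ} (X : ι → Matrix (Fin d) (Fin r) ℝ)
    (S : Finset ι) : Matrix (Fin d) (Fin d) ℝ :=
  ((S.card : ℝ)⁻¹) • ∑ i ∈ S, (X i - empMean X S) * (X i - empMean X S)ᵀ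

lemma sum_mulVec' {ι : Type*} {d r : ℕ} (s : Finset ι) (A : ι → Matrix (Fin d) (Fin r) ℝ)
    (v : Fin r → ℝ) : (∑ i ∈ s, A i) *ᵥ v = ∑ i ∈ s, A i *ᵥ v := by
  ext j
  simp [Matrix.mulVec, dotProduct, Matrix.sum_apply, Finset.sum_mul]
  rw [Finset.sum_comm]

lemma dotProduct_sum' {ι : Type*} {r : ℕ} (v : Fin r → ℝ) (s : Finset ι)
    (f : ι → Fin r → ℝ) : v ⬝ᵥ (∑ i ∈ s, f i) = ∑ i ∈ s, v ⬝ᵥ f i := by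
  simp only [dotProduct, Finset.sum_apply, Finset.mul_sum]
  rw [Finset.sum_comm]

lemma quad_le_spec {d : ℕ} (M : Matrix (Fin d) (Fin d) ℝ) (v : Fin d → ℝ)
    (hv : ∑ j, v j ^ 2 = 1) : v ⬝ᵥ (M *ᵥ v) ≤ spec M := by
  set v' : EuclideanSpace ℝ (Fin d) := (WithLp.equiv 2 (Fin d → ℝ)).symm v with hv'
  set f := LinearMap.toContinuousLinearMap (Matrix.toEuclideanLin M) with hf
  have hnv : ‖v'‖ = 1 := by
    rw [EuclideanSpace.norm_eq]
    simp only [hv', WithLp.equiv_symm_apply, PiLp.toLp_apply, Real.norm_eq_abs, sq_abs]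
    rw [hv, Real.sqrt_one]
  have hip : v ⬝ᵥ (M *ᵥ v) = inner ℝ v' (f v') := by
    simp [PiLp.inner_apply, RCLike.inner_apply, hv', hf, dotProduct,
      WithLp.equiv_symm_apply, Matrix.toEuclideanLin_apply_piLp_toLp]
    exact Finset.sum_congr rfl fun i _ => mul_comm _ _
  rw [hip]
  have h1 := real_inner_le_norm v' (f v')
  have h2 := f.le_opNorm v'
  rw [hnv, mul_one] at h2
  rw [hnv, one_mul] at h1
  exact h1.trans h2

lemma sum_sub_empMean {ι : Type*} {d r : ℕ} (X : ι → Matrix (Fin d) (Fin r) ℝ)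
    (T : Finset ι) (hT : T.Nonempty) : ∑ i ∈ T, (X i - empMean X T) = 0 := by
  have h : (T.card : ℝ) ≠ 0 := by
    exact_mod_cast (Finset.card_pos.mpr hT).ne'
  rw [Finset.sum_sub_distrib, Finset.sum_const, empMean,
    ← Nat.cast_smul_eq_nsmul ℝ, smul_smul, mul_inv_cancel₀ h, one_smul, sub_self]

lemma quad_to_w {d r : ℕ} (M : Matrix (Fin d) (Fin r) ℝ) (v : Fin d → ℝ) :
    v ⬝ᵥ ((M * Mᵀ) *ᵥ v) = (Mᵀ *ᵥ v) ⬝ᵥ (Mᵀ *ᵥ v) := by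
  rw [← Matrix.mulVec_mulVec, Matrix.dotProduct_mulVec, ← Matrix.mulVec_transpose]

set_option maxHeartbeats 1000000 in
/-- If the full-sample covariance is large relative to the good-set covariance, then the
good points carry at most a `1/γ` fraction of the total outlier scores along the leading
eigendirection `v` of `Σ_S`. -/
theorem scores_on_good_set_larger {ι : Type*} {d r : ℕ}
    (X : ι → Matrix (Fin d) (Fin r) ℝ) (S G : Finset ι)
    (hsub : G ⊆ S) (hG : G.Nonempty) (hS : S.Nonempty)
    (v : Fin d → ℝ) (hv : ∑ j, v j ^ 2 = 1)
    (hvEig : empCov X S *ᵥ v = spec (empCov X S) • v)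
    (τ : ι → ℝ)
    (hτ : ∀ i ∈ S, τ i = v ⬝ᵥ (((X i - empMean X S) * (X i - empMean X S)ᵀ) *ᵥ v))
    (η γ : ℝ) (hη : η = 1 - (G.card : ℝ) / S.card)
    (hγ0 : 0 < γ) (hγη : γ * η < 1)
    (hbig : (1 - η) ^ 2 * (γ / (1 - γ * η)) * spec (empCov X G) ≤ spec (empCov X S)) :
    ∑ j ∈ G, τ j ≤ (1 / γ) * ∑ i ∈ S, τ i := by
  classical
  set n : ℝ := (S.card : ℝ) with hn
  set g : ℝ := (G.card : ℝ) with hg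
  have hn0 : (0:ℝ) < n := by rw [hn]; exact_mod_cast Finset.card_pos.mpr hS
  have hg0 : (0:ℝ) < g := by rw [hg]; exact_mod_cast Finset.card_pos.mpr hG
  have hgn : g ≤ n := by rw [hg, hn]; exact_mod_cast Finset.card_le_card hsub
  set lam := spec (empCov X S) with hlam
  set sg := spec (empCov X G) with hsg
  set w : ι → Fin r → ℝ := fun i => (X i - empMean X S)ᵀ *ᵥ v with hw
  have hτw : ∀ i ∈ S, τ i = w i ⬝ᵥ w i := fun i hi => by
    rw [hτ i hi]; exact quad_to_w _ _
  set A := ∑ j ∈ G, τ j with hA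
  set T := ∑ i ∈ S, τ i with hT
  -- quadratic form over a set
  have hquad : ∀ (U : Finset ι), v ⬝ᵥ (empCov X U *ᵥ v)
      = ((U.card : ℝ))⁻¹ * ∑ i ∈ U, ((X i - empMean X U)ᵀ *ᵥ v) ⬝ᵥ ((X i - empMean X U)ᵀ *ᵥ v) := by
    intro U
    rw [empCov, Matrix.smul_mulVec, dotProduct_smul, sum_mulVec',
      dotProduct_sum', smul_eq_mul]
    congr 1
    exact Finset.sum_congr rfl fun i _ => quad_to_w _ _
  have hvv : v ⬝ᵥ v = 1 := by
    rw [← hv]; simp [dotProduct, sq]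
  -- T = n * lam
  have hTlam : T = n * lam := by
    have h1 : v ⬝ᵥ (empCov X S *ᵥ v) = lam := by
      rw [hvEig, dotProduct_smul, smul_eq_mul, hvv, mul_one]
    have h2 := hquad S
    rw [h1, ← hn] at h2
    have h3 : T = ∑ i ∈ S, w i ⬝ᵥ w i := Finset.sum_congr rfl hτw
    rw [h3]
    simp only [hw]
    rw [h2, ← mul_assoc, mul_inv_cancel₀ hn0.ne', one_mul]
  -- sum of w over S is zero
  have hsum0 : ∑ i ∈ S, w i = 0 := by
    simp only [hw]
    rw [← sum_mulVec', ← Matrix.transpose_sum, sum_sub_empMean X S hS,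
      Matrix.transpose_zero, Matrix.zero_mulVec]
  -- decomposition over G
  set u : Fin r → ℝ := (empMean X G - empMean X S)ᵀ *ᵥ v with hu
  set y : ι → Fin r → ℝ := fun j => (X j - empMean X G)ᵀ *ᵥ v with hy
  have hwy : ∀ j ∈ G, w j = y j + u := by
    intro j hj
    simp only [hw, hy, hu]
    rw [← Matrix.add_mulVec, ← Matrix.transpose_add]
    abel_nf
  have hysum : ∑ j ∈ G, y j = 0 := by
    simp only [hy]
    rw [← sum_mulVec', ← Matrix.transpose_sum, sum_sub_empMean X G hG,
      Matrix.transpose_zero, Matrix.zero_mulVec]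
  set q := v ⬝ᵥ (empCov X G *ᵥ v) with hq
  have hyq : ∑ j ∈ G, y j ⬝ᵥ y j = g * q := by
    have := hquad G
    rw [← hg] at this
    rw [hq, this, ← mul_assoc, mul_inv_cancel₀ hg0.ne', one_mul]
  -- A = g*q + g*(u⬝u)
  have hAq : A = g * q + g * (u ⬝ᵥ u) := by
    have h1 : A = ∑ j ∈ G, (y j + u) ⬝ᵥ (y j + u) := by
      rw [hA]
      refine Finset.sum_congr rfl fun j hj => ?_
      rw [hτw j (hsub hj), hwy j hj]
    rw [h1]
    have h2 : ∀ j, (y j + u) ⬝ᵥ (y j + u)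
        = y j ⬝ᵥ y j + (u ⬝ᵥ y j + y j ⬝ᵥ u) + u ⬝ᵥ u := by
      intro j
      rw [add_dotProduct, dotProduct_add, dotProduct_add]
      ring
    simp only [h2]
    rw [Finset.sum_add_distrib, Finset.sum_add_distrib, Finset.sum_add_distrib, hyq]
    have e1 : ∑ j ∈ G, u ⬝ᵥ y j = 0 := by
      rw [← dotProduct_sum', hysum, dotProduct_zero]
    have e2 : ∑ j ∈ G, y j ⬝ᵥ u = 0 := by
      rw [Finset.sum_congr rfl (fun j _ => dotProduct_comm (y j) u), e1]
    have e3 : ∑ _j ∈ G, u ⬝ᵥ u = g * (u ⬝ᵥ u) := by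
      rw [Finset.sum_const, nsmul_eq_mul, hg]
    rw [e1, e2, e3]; ring
  -- bad set
  set B := S \ G with hB
  have hcardB : ((B.card : ℝ)) = n - g := by
    rw [hB, Finset.card_sdiff_of_subset hsub, Nat.cast_sub (Finset.card_le_card hsub), hn, hg]
  have hTB : ∑ i ∈ B, τ i = T - A := by
    rw [hT, hA, hB, ← Finset.sum_sdiff hsub]; ring
  have hwB : ∑ i ∈ B, w i = -∑ j ∈ G, w j :=
    eq_neg_of_add_eq_zero_left (by rw [hB, Finset.sum_sdiff hsub]; exact hsum0)
  have hGu : ∑ j ∈ G, w j = g • u := by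
    rw [Finset.sum_congr rfl hwy, Finset.sum_add_distrib, hysum, zero_add,
      Finset.sum_const, ← Nat.cast_smul_eq_nsmul ℝ, hg]
  have hCS : (∑ i ∈ B, w i) ⬝ᵥ (∑ i ∈ B, w i) ≤ (B.card : ℝ) * ∑ i ∈ B, w i ⬝ᵥ w i := by
    have step : ∀ k, (∑ i ∈ B, w i k) ^ 2 ≤ (B.card : ℝ) * ∑ i ∈ B, (w i k) ^ 2 :=
      fun k => by exact sq_sum_le_card_mul_sum_sq
    calc (∑ i ∈ B, w i) ⬝ᵥ (∑ i ∈ B, w i) = ∑ k, (∑ i ∈ B, w i k) ^ 2 := by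
          simp [dotProduct, Finset.sum_apply, sq]
      _ ≤ ∑ k, (B.card : ℝ) * ∑ i ∈ B, (w i k) ^ 2 :=
          Finset.sum_le_sum fun k _ => step k
      _ = (B.card : ℝ) * ∑ i ∈ B, w i ⬝ᵥ w i := by
          rw [← Finset.mul_sum]
          congr 1
          rw [Finset.sum_comm]
          exact Finset.sum_congr rfl fun i _ => by simp [dotProduct, sq]
  have hkey : g ^ 2 * (u ⬝ᵥ u) ≤ (n - g) * (T - A) := by
    have e : (∑ i ∈ B, w i) ⬝ᵥ (∑ i ∈ B, w i) = g ^ 2 * (u ⬝ᵥ u) := by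
      rw [hwB, neg_dotProduct, dotProduct_neg, neg_neg, hGu,
        smul_dotProduct, dotProduct_smul, smul_eq_mul, smul_eq_mul]
      ring
    have e2 : ∑ i ∈ B, w i ⬝ᵥ w i = T - A := by
      rw [← hTB]
      exact Finset.sum_congr rfl fun i hi =>
        (hτw i (Finset.mem_sdiff.mp (by rwa [hB] at hi)).1).symm
    rw [e, e2, hcardB] at hCS
    exact hCS
  have hqsg : q ≤ sg := quad_le_spec (empCov X G) v hv
  -- final algebra
  have h1 : g * A ≤ g ^ 2 * sg + (n - g) * (T - A) := by
    nlinarith [hAq, hkey, mul_le_mul_of_nonneg_left hqsg (sq_nonneg g)]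
  have h2 : n * A ≤ g ^ 2 * sg + (n - g) * T := by nlinarith [h1, hgn]
  have h1η : 1 - η = g / n := by rw [hη]; ring
  have hcγ : 0 < 1 - γ * η := by linarith
  have h3 : γ * (g ^ 2 * sg) ≤ (1 - γ * η) * (n ^ 2 * lam) := by
    have hb := hbig
    rw [h1η] at hb
    have hmul := mul_le_mul_of_nonneg_left hb
      (le_of_lt (mul_pos hcγ (pow_pos hn0 2) : (0:ℝ) < (1 - γ * η) * n ^ 2))
    calc γ * (g ^ 2 * sg)
        = ((1 - γ * η) * n ^ 2) * ((g / n) ^ 2 * (γ / (1 - γ * η)) * sg) := by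
          field_simp
      _ ≤ ((1 - γ * η) * n ^ 2) * lam := hmul
      _ = (1 - γ * η) * (n ^ 2 * lam) := by ring
  have hη' : n - g = η * n := by rw [hη]; field_simp
  have h4 : γ * (n * A) ≤ n * (n * lam) := by
    have hm := mul_le_mul_of_nonneg_left h2 hγ0.le
    have hsub2 : γ * ((n - g) * T) = γ * η * (n ^ 2 * lam) := by rw [hη', hTlam]; ring
    nlinarith [h3, hm, hsub2]
  rw [hTlam, one_div, ← div_eq_inv_mul, le_div_iff₀ hγ0]
  nlinarith [h4, hn0]
end

section
/- Let X be a set with a function dist: X × X → ℝ satisfying the triangle inequality and symmetry, let θ* ∈ X, and let Λ = {2^j : j_lo ≤ j ≤ j_hi} be a finite geometric grid. Suppose f: Λ → ℝ≥0 is monotone increasing and for each λ ∈ Λ we have an estimate θ_λ ∈ X. Assume there is λ_crit ∈ Λ such that dist(θ_λ, θ*) ≤ f(λ) for all λ ∈ Λ with λ ≥ λ_crit. Define λ̂ := min{λ ∈ Λ : dist(θ_λ, θ_{λ'}) ≤ f(λ) + f(λ') for all λ' ∈ Λ with λ' ≥ λ}. Then λ̂ ≤ λ_crit and dist(θ_{λ̂},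 θ*) ≤ 3 f(λ_crit). -/
open Finset

/-- Abstract Lepski-type adaptation argument: if all estimates at scales above `lamcrit`
are `f`-accurate, the smallest scale pairwise-consistent with all larger scales is at most
`lamcrit` and its estimate is within `3 f(lamcrit)` of the truth. -/
theorem lepski_adaptation {X : Type*} (dst : X → X → ℝ)
    (hsymm : ∀ a b, dst a b = dst b a)
    (htri : ∀ a b c, dst a c ≤ dst a b + dst b c)
    (jlo jhi : ℤ) (Lam : Finset ℝ)
    (hLam : Lam = (Finset.Icc jlo jhi).image (fun j => (2 : ℝ) ^ j))
    (f : ℝ → ℝ) (hf0 : ∀ lam ∈ Lam, 0 ≤ f lam)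
    (hfmono : ∀ lam ∈ Lam, ∀ lam' ∈ Lam, lam ≤ lam' → f lam ≤ f lam')
    (θ : ℝ → X) (θstar : X)
    (lamcrit : ℝ) (hcrit : lamcrit ∈ Lam)
    (hacc : ∀ lam ∈ Lam, lamcrit ≤ lam → dst (θ lam) θstar ≤ f lam)
    (lamhat : ℝ) (hhatmem : lamhat ∈ Lam)
    (hhatcons : ∀ lam' ∈ Lam, lamhat ≤ lam' → dst (θ lamhat) (θ lam') ≤ f lamhat + f lam')
    (hhatmin : ∀ lam ∈ Lam,
      (∀ lam' ∈ Lam, lam ≤ lam' → dst (θ lam) (θ lam') ≤ f lam + f lam') → lamhat ≤ lam) :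
    lamhat ≤ lamcrit ∧ dst (θ lamhat) θstar ≤ 3 * f lamcrit := by
  have hle : lamhat ≤ lamcrit := by
    apply hhatmin lamcrit hcrit
    intro lam' hmem' hle'
    calc dst (θ lamcrit) (θ lam') ≤ dst (θ lamcrit) θstar + dst θstar (θ lam') :=
          htri _ _ _
      _ ≤ f lamcrit + f lam' := by
          have h1 := hacc lamcrit hcrit le_rfl
          have h2 := hacc lam' hmem' hle'
          rw [hsymm θstar (θ lam')]
          linarith
  refine ⟨hle, ?_⟩
  have h1 := hhatcons lamcrit hcrit hle
  have h2 := hacc lamcrit hcrit le_rfl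
  have h3 := hfmono lamhat hhatmem lamcrit hcrit hle
  calc dst (θ lamhat) θstar ≤ dst (θ lamhat) (θ lamcrit) + dst (θ lamcrit) θstar :=
        htri _ _ _
    _ ≤ 3 * f lamcrit := by linarith
end
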